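/- Let n ≥ 2, let H_1, ..., H_k be finite simple graphs with H_1 a single edge, and let β = (β_1, ..., β_k) ∈ ℝ^k with β_2, ..., β_k ≥ 0 (β_1 arbitrary). Then the exponential random graph measure μ_{n;β} satisfies the GKS inequality: for all subsets A, B ⊆ E_n, E_{n;β}(x_A x_B) ≥ E_{n;β}(x_A) · E_{n;β}(x_B), where x_C := Π_{i∈C} x_i for C ⊆ E_n (with x_∅ = 1). -/

import Mathlib

open Finset

/-- Edges of the complete graph on `n` labeled vertices. -/
def Edge (n : ℕ) : Type := {e : Sym2 (Fin n) // ¬ e.IsDiag}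

instance (n : ℕ) : Fintype (Edge n) := by unfold Edge; infer_instance
instance (n : ℕ) : DecidableEq (Edge n) := by unfold Edge; infer_instance

/-- The simple graph on `Fin n` associated with a configuration `x ∈ {0,1}^{E_n}`. -/
def graphOf {n : ℕ} (x : Edge n → Fin 2) : SimpleGraph (Fin n) where
  Adj a b := ∃ hab : a ≠ b, x ⟨s(a, b), fun hd => hab (Sym2.mk_isDiag_iff.mp hd)⟩ = 1
  symm := by
    constructor
    rintro a b ⟨hab, hx⟩
    refine ⟨hab.symm, ?_⟩
    have he : (⟨s(b, a), fun hd => hab.symm (Sym2.mk_isDiag_iff.mp hd)⟩ : Edge n)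
        = ⟨s(a, b), fun hd => hab (Sym2.mk_isDiag_iff.mp hd)⟩ :=
      Subtype.ext Sym2.eq_swap
    rw [he]; exact hx
  loopless := by constructor; rintro a ⟨hab, _⟩; exact hab rfl

/-- The number `hom(H, G)` of edge-preserving vertex maps from `H` to `G`. -/
noncomputable def homCount {V W : Type*} (H : SimpleGraph W) (G : SimpleGraph V) : ℕ :=
  Nat.card {f : W → V // ∀ a b, H.Adj a b → G.Adj (f a) (f b)}

/-- The homomorphism density `t(H, G) = hom(H, G) / n^{|V(H)|}` for a graph `G`
on `n` vertices and `H` on `m` vertices. -/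
noncomputable def homDensity {m n : ℕ} (H : SimpleGraph (Fin m)) (G : SimpleGraph (Fin n)) : ℝ :=
  (homCount H G : ℝ) / (n : ℝ) ^ m

/-- The Hamiltonian of a general exponential random graph:
`H_{n;β}(G) = n² Σ_j β_j t(H_j, G)`. -/
noncomputable def HamERG (n k : ℕ) (m : Fin k → ℕ)
    (Hs : (j : Fin k) → SimpleGraph (Fin (m j))) (β : Fin k → ℝ)
    (x : Edge n → Fin 2) : ℝ :=
  (n : ℝ) ^ 2 * ∑ j : Fin k, β j * homDensity (Hs j) (graphOf x)

/-- Partition function of the exponential random graph. -/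
noncomputable def ZERG (n k : ℕ) (m : Fin k → ℕ)
    (Hs : (j : Fin k) → SimpleGraph (Fin (m j))) (β : Fin k → ℝ) : ℝ :=
  ∑ x : Edge n → Fin 2, Real.exp (HamERG n k m Hs β x)

/-- Gibbs measure of the exponential random graph. -/
noncomputable def gibbsERG (n k : ℕ) (m : Fin k → ℕ)
    (Hs : (j : Fin k) → SimpleGraph (Fin (m j))) (β : Fin k → ℝ)
    (x : Edge n → Fin 2) : ℝ :=
  Real.exp (HamERG n k m Hs β x) / ZERG n k m Hs β

/-- Expectation under the exponential random graph measure. -/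
noncomputable def expectERG (n k : ℕ) (m : Fin k → ℕ)
    (Hs : (j : Fin k) → SimpleGraph (Fin (m j))) (β : Fin k → ℝ)
    (f : (Edge n → Fin 2) → ℝ) : ℝ :=
  ∑ x : Edge n → Fin 2, f x * gibbsERG n k m Hs β x


section AuxGKS

variable {n : ℕ}

lemma fin2_le_one_of (a b : Fin 2) (h : a ≤ b) (ha : a = 1) : b = 1 := by revert h ha; revert a b; decide

lemma fin2_inf_eq_one (a b : Fin 2) : a ⊓ b = 1 ↔ a = 1 ∧ b = 1 := by revert a b; decide

lemma fin2_mod (a b : Fin 2) :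
    ((if a ⊓ b = 1 then 1 else 0) + (if a ⊔ b = 1 then 1 else 0) : ℕ)
      = (if a = 1 then 1 else 0) + (if b = 1 then 1 else 0) := by revert a b; decide

lemma graphOf_mono {x y : Edge n → Fin 2} (h : x ≤ y) {a b : Fin n}
    (hx : (graphOf x).Adj a b) : (graphOf y).Adj a b := by
  obtain ⟨hab, he⟩ := hx
  exact ⟨hab, fin2_le_one_of _ _ (h _) he⟩

lemma graphOf_inf_adj {x y : Edge n → Fin 2} {a b : Fin n} :
    (graphOf (x ⊓ y)).Adj a b ↔ (graphOf x).Adj a b ∧ (graphOf y).Adj a b := by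
  constructor
  · rintro ⟨hab, he⟩
    change (x _ ⊓ y _) = 1 at he
    rw [fin2_inf_eq_one] at he
    exact ⟨⟨hab, he.1⟩, ⟨hab, he.2⟩⟩
  · rintro ⟨⟨hab, hx⟩, ⟨hab2, hy⟩⟩
    exact ⟨hab, by change (x _ ⊓ y _) = 1; rw [fin2_inf_eq_one]; exact ⟨hx, hy⟩⟩

/-- The homomorphism condition for a fixed vertex map. -/
def homPred {m : ℕ} (H : SimpleGraph (Fin m)) (x : Edge n → Fin 2) (f : Fin m → Fin n) : Prop :=
  ∀ a b, H.Adj a b → (graphOf x).Adj (f a) (f b)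

open Classical in
lemma homCount_graphOf {m : ℕ} (H : SimpleGraph (Fin m)) (x : Edge n → Fin 2) :
    homCount H (graphOf x) = ∑ f : Fin m → Fin n, if homPred H x f then 1 else 0 := by
  rw [homCount, Nat.card_eq_fintype_card, Fintype.card_subtype]
  simp only [homPred]
  rw [Finset.card_filter]
  refine Finset.sum_congr rfl fun f _ => ?_
  by_cases h : ∀ a b, H.Adj a b → (graphOf x).Adj (f a) (f b)
  · rw [if_pos h]; exact (if_pos (c := homPred H x f) h).symm
  · rw [if_neg h]; simp [h]

lemma homPred_inf {m : ℕ} {H : SimpleGraph (Fin m)} {x y : Edge n → Fin 2}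
    {f : Fin m → Fin n} : homPred H (x ⊓ y) f ↔ homPred H x f ∧ homPred H y f := by
  constructor
  · intro h
    exact ⟨fun a b hab => (graphOf_inf_adj.mp (h a b hab)).1,
      fun a b hab => (graphOf_inf_adj.mp (h a b hab)).2⟩
  · rintro ⟨h1, h2⟩ a b hab
    exact graphOf_inf_adj.mpr ⟨h1 a b hab, h2 a b hab⟩

lemma homPred_sup_left {m : ℕ} {H : SimpleGraph (Fin m)} {x y : Edge n → Fin 2}
    {f : Fin m → Fin n} (h : homPred H x f) : homPred H (x ⊔ y) f :=
  fun a b hab => graphOf_mono le_sup_left (h a b hab)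

lemma homPred_sup_right {m : ℕ} {H : SimpleGraph (Fin m)} {x y : Edge n → Fin 2}
    {f : Fin m → Fin n} (h : homPred H y f) : homPred H (x ⊔ y) f :=
  fun a b hab => graphOf_mono le_sup_right (h a b hab)

lemma homCount_supermod {m : ℕ} (H : SimpleGraph (Fin m)) (x y : Edge n → Fin 2) :
    homCount H (graphOf x) + homCount H (graphOf y)
      ≤ homCount H (graphOf (x ⊓ y)) + homCount H (graphOf (x ⊔ y)) := by
  classical
  simp only [homCount_graphOf, ← Finset.sum_add_distrib]
  refine Finset.sum_le_sum fun f _ => ?_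
  by_cases hx : homPred H x f <;> by_cases hy : homPred H y f
  · simp [hx, hy, homPred_inf.mpr ⟨hx, hy⟩, homPred_sup_left (y := y) hx]
  · simp only [if_pos hx, if_neg hy, if_pos (homPred_sup_left (y := y) hx)]
    omega
  · simp only [if_neg hx, if_pos hy, if_pos (homPred_sup_right (x := x) hy)]
    omega
  · simp [hx, hy]

lemma homCount_edge_mod {m₀ : ℕ} (hm : m₀ = 2) (H : SimpleGraph (Fin m₀))
    (hH : ∀ a b, H.Adj a b ↔ a ≠ b) (x y : Edge n → Fin 2) :
    homCount H (graphOf (x ⊓ y)) + homCount H (graphOf (x ⊔ y))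
      = homCount H (graphOf x) + homCount H (graphOf y) := by
  classical
  subst hm
  have hpred : ∀ (z : Edge n → Fin 2) (f : Fin 2 → Fin n),
      homPred H z f ↔ (graphOf z).Adj (f 0) (f 1) := by
    intro z f
    constructor
    · intro h; exact h 0 1 ((hH 0 1).mpr (by decide))
    · intro h a b hab
      rw [hH] at hab
      have ha : a = 0 ∨ a = 1 := by omega
      have hb : b = 0 ∨ b = 1 := by omega
      rcases ha with rfl | rfl <;> rcases hb with rfl | rfl
      · exact absurd rfl hab
      · exact h
      · exact h.symm
      · exact absurd rfl hab
  simp only [homCount_graphOf, ← Finset.sum_add_distrib]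
  refine Finset.sum_congr rfl fun f _ => ?_
  simp only [hpred]
  by_cases hfe : f 0 = f 1
  · have : ∀ z : Edge n → Fin 2, ¬ (graphOf z).Adj (f 0) (f 1) := by
      rintro z ⟨hne, h2⟩; exact hne hfe
    simp [this]
  · set e : Edge n := ⟨s(f 0, f 1), fun hd => hfe (Sym2.mk_isDiag_iff.mp hd)⟩ with he
    have hadj : ∀ z : Edge n → Fin 2, (graphOf z).Adj (f 0) (f 1) ↔ z e = 1 := by
      intro z
      constructor
      · rintro ⟨h1, hz⟩; exact hz
      · intro hz; exact ⟨hfe, hz⟩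
    simp only [hadj, Pi.inf_apply, Pi.sup_apply]
    exact fin2_mod (x e) (y e)

end AuxGKS

lemma hamERG_supermod (n k : ℕ) (hn : 2 ≤ n) (hk : 0 < k) (m : Fin k → ℕ)
    (Hs : (j : Fin k) → SimpleGraph (Fin (m j))) (β : Fin k → ℝ)
    (hm₀ : m ⟨0, hk⟩ = 2)
    (hH₁ : ∀ a b, (Hs ⟨0, hk⟩).Adj a b ↔ a ≠ b)
    (hβ : ∀ j : Fin k, j ≠ ⟨0, hk⟩ → 0 ≤ β j) (x y : Edge n → Fin 2) :
    HamERG n k m Hs β x + HamERG n k m Hs β y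
      ≤ HamERG n k m Hs β (x ⊓ y) + HamERG n k m Hs β (x ⊔ y) := by
  have hnpos : (0 : ℝ) < n := by exact_mod_cast lt_of_lt_of_le (by norm_num) hn
  unfold HamERG
  rw [← mul_add, ← mul_add]
  refine mul_le_mul_of_nonneg_left ?_ (by positivity)
  rw [← Finset.sum_add_distrib, ← Finset.sum_add_distrib]
  refine Finset.sum_le_sum fun j _ => ?_
  rw [← mul_add, ← mul_add]
  unfold homDensity
  rw [← add_div, ← add_div]
  by_cases hj : j = ⟨0, hk⟩
  · subst hj
    refine le_of_eq ?_
    congr 1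
    congr 1
    have := homCount_edge_mod hm₀ (Hs ⟨0, hk⟩) hH₁ x y
    exact_mod_cast (congrArg (fun t : ℕ => (t : ℝ)) this).symm
  · refine mul_le_mul_of_nonneg_left ?_ (hβ j hj)
    have hc : (0 : ℝ) < (n : ℝ) ^ (m j) := by positivity
    rw [div_le_div_iff_of_pos_right hc]
    exact_mod_cast homCount_supermod (Hs j) x y

/-- if `H₁` is a single edge, `β₁ ∈ ℝ` is arbitrary and
`β₂, …, β_k ≥ 0`, the exponential random graph measure satisfies the GKS
inequality `E(x_A x_B) ≥ E(x_A) E(x_B)`. -/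
theorem erg_gks_inequality (n k : ℕ) (hn : 2 ≤ n) (hk : 0 < k) (m : Fin k → ℕ)
    (Hs : (j : Fin k) → SimpleGraph (Fin (m j))) (β : Fin k → ℝ)
    (hm₀ : m ⟨0, hk⟩ = 2)
    (hH₁ : ∀ a b, (Hs ⟨0, hk⟩).Adj a b ↔ a ≠ b)
    (hβ : ∀ j : Fin k, j ≠ ⟨0, hk⟩ → 0 ≤ β j)
    (A B : Finset (Edge n)) :
    (∑ x : Edge n → Fin 2, (∏ i ∈ A, ((x i : ℕ) : ℝ)) * gibbsERG n k m Hs β x)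
        * (∑ x : Edge n → Fin 2, (∏ i ∈ B, ((x i : ℕ) : ℝ)) * gibbsERG n k m Hs β x)
      ≤ ∑ x : Edge n → Fin 2,
          ((∏ i ∈ A, ((x i : ℕ) : ℝ)) * ∏ i ∈ B, ((x i : ℕ) : ℝ)) * gibbsERG n k m Hs β x := by
  classical
  set μ : (Edge n → Fin 2) → ℝ := fun x => Real.exp (HamERG n k m Hs β x) with hμdef
  set F : (Edge n → Fin 2) → ℝ := fun x => ∏ i ∈ A, ((x i : ℕ) : ℝ) with hF
  set G : (Edge n → Fin 2) → ℝ := fun x => ∏ i ∈ B, ((x i : ℕ) : ℝ) with hG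
  have hμ0 : (0 : (Edge n → Fin 2) → ℝ) ≤ μ := fun x => (Real.exp_pos _).le
  have hprodnn : ∀ (C : Finset (Edge n)) (x : Edge n → Fin 2),
      (0 : ℝ) ≤ ∏ i ∈ C, ((x i : ℕ) : ℝ) :=
    fun C x => Finset.prod_nonneg fun i _ => by positivity
  have hprodmono : ∀ C : Finset (Edge n),
      Monotone (fun x : Edge n → Fin 2 => ∏ i ∈ C, ((x i : ℕ) : ℝ)) := by
    intro C x y hxy
    refine Finset.prod_le_prod (fun i _ => by positivity) (fun i _ => ?_)
    have := hxy i
    rw [Fin.le_def] at this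
    exact_mod_cast this
  have hlog : ∀ a b : Edge n → Fin 2, μ a * μ b ≤ μ (a ⊓ b) * μ (a ⊔ b) := by
    intro a b
    rw [hμdef]
    dsimp only
    rw [← Real.exp_add, ← Real.exp_add]
    exact Real.exp_le_exp.mpr (hamERG_supermod n k hn hk m Hs β hm₀ hH₁ hβ a b)
  have hfkg := fkg F G μ hμ0 (fun x => hprodnn A x) (fun x => hprodnn B x)
    (hprodmono A) (hprodmono B) hlog
  have hZ : 0 < ZERG n k m Hs β :=
    Finset.sum_pos (fun x _ => Real.exp_pos _) Finset.univ_nonempty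
  have hZsum : ZERG n k m Hs β = ∑ x : Edge n → Fin 2, μ x := rfl
  have hconv : ∀ h : (Edge n → Fin 2) → ℝ,
      (∑ x : Edge n → Fin 2, h x * gibbsERG n k m Hs β x)
        = (∑ x : Edge n → Fin 2, μ x * h x) * (ZERG n k m Hs β)⁻¹ := by
    intro h
    rw [Finset.sum_mul]
    refine Finset.sum_congr rfl fun x _ => ?_
    rw [gibbsERG, div_eq_mul_inv]
    ring
  rw [hconv, hconv, hconv]
  set Z := ZERG n k m Hs β
  set TF := ∑ x : Edge n → Fin 2, μ x * F x
  set TG := ∑ x : Edge n → Fin 2, μ x * G x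
  set TFG := ∑ x : Edge n → Fin 2, μ x * (F x * G x)
  have hfkg' : TF * TG ≤ Z * TFG := by
    rw [hZsum]
    exact hfkg
  calc TF * Z⁻¹ * (TG * Z⁻¹) = TF * TG * (Z⁻¹ * Z⁻¹) := by ring
    _ ≤ Z * TFG * (Z⁻¹ * Z⁻¹) := by
        refine mul_le_mul_of_nonneg_right hfkg' ?_
        positivity
    _ = TFG * Z⁻¹ := by field_simp
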